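/- Let k ≥ 2 and r ≥ k-1. If every (r-1)-uniform hypergraph H' on at most n-1 vertices with no tight k-path satisfies |H'| ≤ (k²/(2(r-1)))·C(n-1, r-2), and H is an r-uniform hypergraph on n vertices with no tight k-path, then |H| ≤ (k²/(2r))·C(n, r-1). -/

import Mathlib

/-- A tight path with `k` edges in an `r`-uniform hypergraph `H`. -/
def IsTightPath {α : Type*} [DecidableEq α] (r k : ℕ) (H : Finset (Finset α))
    (v : Fin (k + r - 1) → α) : Prop :=
  Function.Injective v ∧
  ∀ i : Fin k,
    (Finset.image (fun j : Fin r =>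
      v ⟨i.val + j.val, by have := i.isLt; have := j.isLt; omega⟩) Finset.univ) ∈ H

namespace TightAux

variable {α : Type*} [DecidableEq α]

/-- the link of a vertex -/
def linkAt (H : Finset (Finset α)) (v : α) : Finset (Finset α) :=
  (H.filter (fun e => v ∈ e)).image (fun e => e.erase v)

/-- number of edges containing a given set -/
def dset (H : Finset (Finset α)) (g : Finset α) : ℕ := (H.filter (fun e => g ⊆ e)).card

lemma mem_linkAt {H : Finset (Finset α)} {v : α} {g : Finset α} :
    g ∈ linkAt H v ↔ ∃ e ∈ H, v ∈ e ∧ e.erase v = g := by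
  simp [linkAt, Finset.mem_image, Finset.mem_filter, and_assoc]

lemma not_mem_of_linkAt {H : Finset (Finset α)} {v : α} {g : Finset α}
    (h : g ∈ linkAt H v) : v ∉ g := by
  obtain ⟨e, -, -, rfl⟩ := mem_linkAt.mp h
  exact Finset.notMem_erase v e

lemma insert_mem_of_linkAt {H : Finset (Finset α)} {v : α} {g : Finset α}
    (h : g ∈ linkAt H v) : insert v g ∈ H := by
  obtain ⟨e, he, hv, rfl⟩ := mem_linkAt.mp h
  rwa [Finset.insert_erase hv]

lemma card_of_mem_linkAt {H : Finset (Finset α)} {v : α} {g : Finset α} {s : ℕ}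
    (hH : ∀ e ∈ H, e.card = s + 1) (h : g ∈ linkAt H v) : g.card = s := by
  obtain ⟨e, he, hv, rfl⟩ := mem_linkAt.mp h
  rw [Finset.card_erase_of_mem hv, hH e he]
  omega

lemma card_linkAt (H : Finset (Finset α)) (v : α) :
    (linkAt H v).card = (H.filter (fun e => v ∈ e)).card := by
  apply Finset.card_image_of_injOn
  intro e he e' he' hee
  simp only [Finset.coe_filter, Set.mem_setOf_eq] at he he'
  have := congrArg (insert v) hee
  rwa [Finset.insert_erase he.2, Finset.insert_erase he'.2] at this

lemma sum_deg {H : Finset (Finset α)} {W : Finset α} {m : ℕ}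
    (hW : ∀ e ∈ H, e ⊆ W) (hc : ∀ e ∈ H, e.card = m) :
    ∑ v ∈ W, (H.filter (fun e => v ∈ e)).card = m * H.card := by
  have h1 : ∀ v ∈ W, (H.filter (fun e => v ∈ e)).card
      = ∑ e ∈ H, (if v ∈ e then 1 else 0) := by
    intro v _; rw [Finset.card_filter]
  calc ∑ v ∈ W, (H.filter (fun e => v ∈ e)).card
      = ∑ v ∈ W, ∑ e ∈ H, (if v ∈ e then 1 else 0) := Finset.sum_congr rfl h1
    _ = ∑ e ∈ H, ∑ v ∈ W, (if v ∈ e then 1 else 0) := Finset.sum_comm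
    _ = ∑ e ∈ H, (W.filter (fun v => v ∈ e)).card := by
        refine Finset.sum_congr rfl (fun e _ => ?_); rw [Finset.card_filter]
    _ = ∑ e ∈ H, e.card := by
        refine Finset.sum_congr rfl (fun e he => ?_)
        congr 1
        ext x
        simp only [Finset.mem_filter]
        exact ⟨fun h => h.2, fun h => ⟨hW e he h, h⟩⟩
    _ = ∑ _e ∈ H, m := Finset.sum_congr rfl (fun e he => hc e he)
    _ = m * H.card := by rw [Finset.sum_const, smul_eq_mul, mul_comm]

lemma tightPath_mono {s j : ℕ} {H₁ H₂ : Finset (Finset α)} {u : Fin (j + s - 1) → α}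
    (hsub : H₁ ⊆ H₂) (h : IsTightPath s j H₁ u) : IsTightPath s j H₂ u :=
  ⟨h.1, fun i => hsub (h.2 i)⟩

/-- every vertex of a tight path lies in some window -/
lemma path_vertex_mem {s j : ℕ} (hs : 1 ≤ s) (hj : 1 ≤ j) {H' : Finset (Finset α)}
    {u : Fin (j + s - 1) → α} (hu : IsTightPath s j H' u) (t : Fin (j + s - 1)) :
    ∃ g ∈ H', u t ∈ g := by
  have htlt := t.isLt
  refine ⟨_, hu.2 ⟨min t.val (j - 1), by omega⟩, ?_⟩
  refine Finset.mem_image.mpr ⟨⟨t.val - min t.val (j-1), by omega⟩, Finset.mem_univ _, ?_⟩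
  exact congrArg u (Fin.ext (by simp only []; omega))

lemma path_ne_of_linkAt {s j : ℕ} (hs : 1 ≤ s) (hj : 1 ≤ j) {H : Finset (Finset α)} {v : α}
    {u : Fin (j + s - 1) → α} (hu : IsTightPath s j (linkAt H v) u)
    (t : Fin (j + s - 1)) : u t ≠ v := by
  obtain ⟨g, hg, hmem⟩ := path_vertex_mem hs hj hu t
  intro h; exact not_mem_of_linkAt hg (h ▸ hmem)

end TightAux

namespace TightAux

variable {α : Type*} [DecidableEq α]

/-- Insertion lemma: a tight `j`-path in the link of `v` (with `j ≤ s+1`) yields a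
tight `j`-path in `H` obtained by inserting `v` at position `j-1`. -/
lemma ins_path {H : Finset (Finset α)} {v : α} {s j : ℕ}
    (hs : 1 ≤ s) (hj : 1 ≤ j) (hjs : j ≤ s + 1)
    (hH : ∀ e ∈ H, e.card = s + 1)
    (u : Fin (j + s - 1) → α)
    (hu : IsTightPath s j (linkAt H v) u) :
    ∃ w : Fin (j + (s + 1) - 1) → α,
      IsTightPath (s + 1) j H w ∧
      ∀ (t : Fin (j + (s + 1) - 1)) (_ : j ≤ (t : ℕ)) (h2 : (t : ℕ) - 1 < j + s - 1),
        w t = u ⟨(t : ℕ) - 1, h2⟩ := by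
  have hvne : ∀ t, u t ≠ v := path_ne_of_linkAt hs hj hu
  refine ⟨fun t => if h1 : (t : ℕ) + 1 < j then u ⟨t, by omega⟩
      else if h2 : (t : ℕ) + 1 = j then v
      else u ⟨(t : ℕ) - 1, by have := t.isLt; omega⟩, ⟨?_, ?_⟩, ?_⟩
  · -- injectivity
    intro a b hab
    have ha := a.isLt; have hb := b.isLt
    apply Fin.ext
    by_cases h1 : (a : ℕ) + 1 < j <;> by_cases h2 : (b : ℕ) + 1 < j <;>
      simp only [h1, h2, dif_pos, dif_neg, not_false_iff] at hab
    · have := hu.1 hab; have := congrArg Fin.val this; simpa using this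
    · by_cases h3 : (b : ℕ) + 1 = j
      · rw [dif_pos h3] at hab; exact absurd hab (hvne _)
      · rw [dif_neg h3] at hab
        have := hu.1 hab; have := congrArg Fin.val this
        simp only [] at this; omega
    · by_cases h3 : (a : ℕ) + 1 = j
      · rw [dif_pos h3] at hab; exact absurd hab.symm (hvne _)
      · rw [dif_neg h3] at hab
        have := hu.1 hab; have := congrArg Fin.val this
        simp only [] at this; omega
    · by_cases h3 : (a : ℕ) + 1 = j <;> by_cases h4 : (b : ℕ) + 1 = j <;>
        simp only [h3, h4, dif_pos, dif_neg, not_false_iff] at hab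
      · omega
      · exact absurd hab.symm (hvne _)
      · exact absurd hab (hvne _)
      · have := hu.1 hab; have := congrArg Fin.val this
        simp only [] at this; omega
  · -- windows
    intro i
    have hi := i.isLt
    have hwin : (Finset.image (fun a : Fin s =>
        u ⟨(i : ℕ) + (a : ℕ), by have := a.isLt; omega⟩) Finset.univ) ∈ linkAt H v := hu.2 i
    have hins := insert_mem_of_linkAt hwin
    convert hins using 1
    ext x
    simp only [Finset.mem_image, Finset.mem_insert, Finset.mem_univ, true_and]
    constructor
    · rintro ⟨a, rfl⟩
      have halt := a.isLt
      by_cases h1 : ((i : ℕ) + (a : ℕ)) + 1 < j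
      · rw [dif_pos h1]
        refine Or.inr ⟨⟨a, by omega⟩, ?_⟩
        exact congrArg u (Fin.ext (by simp only []))
      · by_cases h2 : ((i : ℕ) + (a : ℕ)) + 1 = j
        · rw [dif_neg h1, dif_pos h2]; exact Or.inl rfl
        · rw [dif_neg h1, dif_neg h2]
          refine Or.inr ⟨⟨(a : ℕ) - 1, by omega⟩, ?_⟩
          exact congrArg u (Fin.ext (by simp only []; omega))
    · rintro (rfl | ⟨a, rfl⟩)
      · refine ⟨⟨j - 1 - (i : ℕ), by omega⟩, ?_⟩
        rw [dif_neg (by simp only []; omega), dif_pos (by simp only []; omega)]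
      · have halt := a.isLt
        by_cases h1 : ((i : ℕ) + (a : ℕ)) + 1 < j
        · refine ⟨⟨a, by omega⟩, ?_⟩
          rw [dif_pos (by simp only []; omega)]
        · refine ⟨⟨(a : ℕ) + 1, by omega⟩, ?_⟩
          rw [dif_neg (by simp only []; omega), dif_neg (by simp only []; omega)]
          exact congrArg u (Fin.ext (by simp only []; omega))
  · -- tail values
    intro t ht h2
    have h1 : ¬ ((t : ℕ) + 1 < j) := by omega
    have h3 : ¬ ((t : ℕ) + 1 = j) := by omega
    simp only [h1, h3, dif_neg, not_false_iff]

end TightAux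

namespace TightAux

variable {α : Type*} [DecidableEq α]

/-- Non-extendability: if `H` has a tight `j`-path but no tight `(j+1)`-path, then the
set of last `s` vertices of the path is contained in at most `j` edges of `H`. -/
lemma ext_bound {H : Finset (Finset α)} {s j : ℕ}
    (hH : ∀ e ∈ H, e.card = s + 1)
    (w : Fin (j + (s + 1) - 1) → α)
    (hw : IsTightPath (s + 1) j H w)
    (hnp : ¬ ∃ w' : Fin ((j + 1) + (s + 1) - 1) → α, IsTightPath (s + 1) (j + 1) H w') :
    (H.filter (fun e =>
      (Finset.image (fun t : Fin s => w ⟨j + (t : ℕ), by have := t.isLt; omega⟩)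
        Finset.univ) ⊆ e)).card ≤ j := by
  set F : Finset α := Finset.image (fun t : Fin s => w ⟨j + (t : ℕ), by have := t.isLt; omega⟩)
    Finset.univ with hF
  have hwinj := hw.1
  have himgw : (Finset.image w Finset.univ).card = j + s := by
    rw [Finset.card_image_of_injective _ hwinj, Finset.card_univ, Fintype.card_fin]
    omega
  have hFsub : F ⊆ Finset.image w Finset.univ := by
    rw [hF]; intro x hx
    obtain ⟨t, -, rfl⟩ := Finset.mem_image.mp hx
    exact Finset.mem_image_of_mem w (Finset.mem_univ _)
  have hFcard : F.card = s := by
    rw [hF, Finset.card_image_of_injOn, Finset.card_univ, Fintype.card_fin]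
    intro a _ b _ hab
    have := congrArg Fin.val (hwinj hab)
    simp only [] at this
    exact Fin.ext (by omega)
  -- every edge containing F is inside the image of w
  have hkey : ∀ e ∈ H, F ⊆ e → e \ F ⊆ Finset.image w Finset.univ \ F := by
    intro e he hFe z hz
    rw [Finset.mem_sdiff] at hz ⊢
    refine ⟨?_, hz.2⟩
    by_contra hzw
    -- build a (j+1)-path
    apply hnp
    set w' : Fin (j + 1 + (s + 1) - 1) → α :=
      fun t => if h : (t : ℕ) < j + s then w ⟨t, by omega⟩ else z with hw'
    have hw'lt : ∀ (tv : ℕ) (h2 : tv < j + 1 + (s + 1) - 1) (h1 : tv < j + s),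
        w' ⟨tv, h2⟩ = w ⟨tv, by omega⟩ := by
      intro tv h2 h1
      simp only [hw']
      split_ifs with hc
      rfl
    have hw'z : ∀ (tv : ℕ) (h2 : tv < j + 1 + (s + 1) - 1), ¬ (tv < j + s) →
        w' ⟨tv, h2⟩ = z := by
      intro tv h2 h1
      simp only [hw']
      split_ifs with hc
      rfl
    refine ⟨w', ?_, ?_⟩
    · intro a b hab
      have ha := a.isLt; have hb := b.isLt
      have hae : a = (⟨(a : ℕ), ha⟩ : Fin (j + 1 + (s + 1) - 1)) := rfl
      have hbe : b = (⟨(b : ℕ), hb⟩ : Fin (j + 1 + (s + 1) - 1)) := rfl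
      by_cases h1 : (a : ℕ) < j + s <;> by_cases h2 : (b : ℕ) < j + s
      · rw [hae, hbe, hw'lt _ _ h1, hw'lt _ _ h2] at hab
        have := congrArg Fin.val (hwinj hab); simp only [] at this
        exact Fin.ext (by omega)
      · rw [hae, hbe, hw'lt _ _ h1, hw'z _ _ h2] at hab
        exact absurd (hab ▸ Finset.mem_image_of_mem w (Finset.mem_univ _)) hzw
      · rw [hae, hbe, hw'z _ _ h1, hw'lt _ _ h2] at hab
        exact absurd (hab ▸ Finset.mem_image_of_mem w (Finset.mem_univ _)) hzw
      · exact Fin.ext (by omega)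
    · intro i
      have hi := i.isLt
      by_cases hij : (i : ℕ) < j
      · have hmem : (Finset.image (fun a : Fin (s + 1) =>
            w ⟨(i : ℕ) + (a : ℕ), by have := a.isLt; omega⟩) Finset.univ) ∈ H :=
          hw.2 ⟨i, hij⟩
        convert hmem using 2
        with_reducible ext x
        have hx := x.isLt
        rw [hw'lt ((i : ℕ) + (x : ℕ)) (by omega) (by omega)]
      · -- i = j : the new window is e
        have hij' : (i : ℕ) = j := by omega
        have heF : e = insert z F := by
          have h1 : e \ F = {z} := by
            have hc : (e \ F).card = 1 := by
              rw [Finset.card_sdiff_of_subset hFe, hH e he, hFcard]; omega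
            obtain ⟨y, hy⟩ := Finset.card_eq_one.mp hc
            have hzF : z ∈ e \ F := Finset.mem_sdiff.mpr hz
            rw [hy] at hzF ⊢
            rw [Finset.mem_singleton] at hzF
            rw [hzF]
          calc e = F ∪ e \ F := (Finset.union_sdiff_of_subset hFe).symm
            _ = F ∪ {z} := by rw [h1]
            _ = insert z F := by rw [Finset.union_comm]; rfl
        have hmem : insert z F ∈ H := heF ▸ he
        convert hmem using 2
        ext x
        simp only [Finset.mem_image, Finset.mem_univ, true_and, Finset.mem_insert, hF]
        constructor
        · rintro ⟨a, rfl⟩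
          have halt := a.isLt
          by_cases ha : (a : ℕ) < s
          · rw [hw'lt ((i : ℕ) + (a : ℕ)) (by omega) (by omega)]
            refine Or.inr ⟨⟨a, ha⟩, ?_⟩
            exact congrArg w (Fin.ext (by simp only []; omega))
          · rw [hw'z ((i : ℕ) + (a : ℕ)) (by omega) (by omega)]
            exact Or.inl rfl
        · rintro (rfl | ⟨a, rfl⟩)
          · refine ⟨⟨s, by omega⟩, ?_⟩
            rw [hw'z ((i : ℕ) + s) (by omega) (by omega)]
          · have halt := a.isLt
            refine ⟨⟨(a : ℕ), by omega⟩, ?_⟩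
            rw [hw'lt ((i : ℕ) + (a : ℕ)) (by omega) (by omega)]
            exact congrArg w (Fin.ext (by simp only []; omega))
  -- now the counting
  have hinj : ∀ e ∈ H.filter (fun e => F ⊆ e),
      e \ F ∈ Finset.powersetCard 1 (Finset.image w Finset.univ \ F) := by
    intro e he
    rw [Finset.mem_filter] at he
    rw [Finset.mem_powersetCard]
    refine ⟨hkey e he.1 he.2, ?_⟩
    rw [Finset.card_sdiff_of_subset he.2, hH e he.1, hFcard]; omega
  calc (H.filter (fun e => F ⊆ e)).card
      ≤ (Finset.powersetCard 1 (Finset.image w Finset.univ \ F)).card := by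
        apply Finset.card_le_card_of_injOn (fun e => e \ F) hinj
        intro e he e' he' hee
        simp only [Finset.coe_filter, Set.mem_setOf_eq] at he he'
        have hee' : e \ F = e' \ F := hee
        calc e = F ∪ e \ F := (Finset.union_sdiff_of_subset he.2).symm
          _ = F ∪ e' \ F := by rw [hee']
          _ = e' := Finset.union_sdiff_of_subset he'.2
    _ = j := by
        rw [Finset.card_powersetCard, Finset.card_sdiff_of_subset hFsub, himgw, hFcard,
          Nat.choose_one_right]
        omega

end TightAux

namespace TightAux

variable {α : Type*} [DecidableEq α]

lemma choose_id (m t : ℕ) (ht : 1 ≤ t) : m * (m - 1).choose (t - 1) = t * m.choose t := by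
  rcases Nat.eq_zero_or_pos m with hm | hm
  · subst hm
    rw [Nat.choose_eq_zero_of_lt (show 0 < t by omega)]
    ring
  · obtain ⟨m', rfl⟩ : ∃ m', m = m' + 1 := ⟨m - 1, by omega⟩
    obtain ⟨t', rfl⟩ : ∃ t', t = t' + 1 := ⟨t - 1, by omega⟩
    simpa [Nat.succ_sub_one, mul_comm] using Nat.add_one_mul_choose_eq m' t'

/-- counting the pairs (v, light link-edge of v) -/
lemma sum_light_le {H : Finset (Finset α)} {W : Finset α} {s D : ℕ}
    (hHW : ∀ e ∈ H, e ⊆ W ∧ e.card = s + 1) :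
    ∑ v ∈ W, ((linkAt H v).filter (fun g => dset H g ≤ D)).card
      ≤ D * (W.card).choose s := by
  have hstep : ∀ v, ((linkAt H v).filter (fun g => dset H g ≤ D)).card
      = (H.filter (fun e => v ∈ e ∧ dset H (e.erase v) ≤ D)).card := by
    intro v
    rw [linkAt, Finset.filter_image]
    rw [Finset.card_image_of_injOn, Finset.filter_filter]
    intro e he e' he' hee
    simp only [Finset.coe_filter, Set.mem_setOf_eq, Finset.mem_filter] at he he'
    have := congrArg (insert v) hee
    rwa [Finset.insert_erase he.1.2, Finset.insert_erase he'.1.2] at this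
  calc ∑ v ∈ W, ((linkAt H v).filter (fun g => dset H g ≤ D)).card
      = ∑ v ∈ W, (H.filter (fun e => v ∈ e ∧ dset H (e.erase v) ≤ D)).card :=
        Finset.sum_congr rfl (fun v _ => hstep v)
    _ = (W.sigma (fun v => H.filter (fun e => v ∈ e ∧ dset H (e.erase v) ≤ D))).card :=
        (Finset.card_sigma _ _).symm
    _ ≤ D * ((W.sigma (fun v => H.filter (fun e => v ∈ e ∧ dset H (e.erase v) ≤ D))).image
          (fun p => p.2.erase p.1)).card := by
        apply Finset.card_le_mul_card_image
        intro g hg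
        obtain ⟨p, hp, hpg⟩ := Finset.mem_image.mp hg
        simp only [Finset.mem_sigma, Finset.mem_filter] at hp
        have hgD : dset H g ≤ D := hpg ▸ hp.2.2.2
        calc ((W.sigma (fun v => H.filter (fun e => v ∈ e ∧ dset H (e.erase v) ≤ D))).filter
              (fun p => p.2.erase p.1 = g)).card
            ≤ (H.filter (fun e => g ⊆ e)).card := by
              apply Finset.card_le_card_of_injOn (fun p => p.2)
              · intro q hq
                simp only [Finset.mem_coe, Finset.mem_filter, Finset.mem_sigma] at hq ⊢
                refine ⟨hq.1.2.1, ?_⟩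
                rw [← hq.2]
                exact Finset.erase_subset _ _
              · intro q hq q' hq' hqq
                simp only [Finset.coe_filter, Set.mem_setOf_eq, Finset.mem_sigma,
                  Finset.mem_filter] at hq hq'
                obtain ⟨⟨-, -, hqmem, -⟩, hqg⟩ := hq
                obtain ⟨⟨-, -, hqmem', -⟩, hqg'⟩ := hq'
                have h2 : q.2 = q'.2 := hqq
                have h1 : q.1 = q'.1 := by
                  by_contra hne
                  have hmm : q.1 ∈ q'.2.erase q'.1 := Finset.mem_erase.mpr ⟨hne, h2 ▸ hqmem⟩
                  rw [hqg', ← hqg] at hmm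
                  exact (Finset.notMem_erase _ _) hmm
                exact Sigma.ext h1 (heq_of_eq h2)
          _ ≤ D := hgD
    _ ≤ D * (W.card).choose s := by
        apply Nat.mul_le_mul_left
        have hsub : ((W.sigma (fun v => H.filter (fun e => v ∈ e ∧ dset H (e.erase v) ≤ D))).image
            (fun p => p.2.erase p.1)) ⊆ W.powersetCard s := by
          intro g hg
          obtain ⟨p, hp, hpg⟩ := Finset.mem_image.mp hg
          simp only [Finset.mem_sigma, Finset.mem_filter] at hp
          rw [Finset.mem_powersetCard, ← hpg]
          obtain ⟨hpW, hpH, hpv, -⟩ := hp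
          refine ⟨(Finset.erase_subset _ _).trans (hHW _ hpH).1, ?_⟩
          rw [Finset.card_erase_of_mem hpv, (hHW _ hpH).2]
          omega
        calc _ ≤ (W.powersetCard s).card := Finset.card_le_card hsub
          _ = (W.card).choose s := Finset.card_powersetCard s W

end TightAux

namespace TightAux

variable {α : Type*} [DecidableEq α]

/-- The diagonal case: an `s`-uniform hypergraph with no tight `(s+1)`-path. -/
lemma diag (s : ℕ) (hs : 1 ≤ s) :
    ∀ (W : Finset α) (H : Finset (Finset α)),
      (∀ e ∈ H, e ⊆ W ∧ e.card = s) →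
      (¬ ∃ v : Fin ((s + 1) + s - 1) → α, IsTightPath s (s + 1) H v) →
      (H.card : ℝ) ≤ ((s : ℝ) + 1) ^ 2 / (2 * s) * ((W.card).choose (s - 1)) := by
  induction s, hs using Nat.le_induction with
  | base =>
    intro W H hHW hnp
    have hcard : H.card ≤ 1 := by
      by_contra hc
      have hc2 : 1 < H.card := by omega
      obtain ⟨e, he, e', he', hne⟩ := Finset.one_lt_card.mp hc2
      obtain ⟨x, rfl⟩ := Finset.card_eq_one.mp (hHW e he).2
      obtain ⟨y, rfl⟩ := Finset.card_eq_one.mp (hHW e' he').2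
      have hxy : x ≠ y := fun h => hne (by rw [h])
      apply hnp
      set p : Fin 2 → α := fun t => if (t : ℕ) = 0 then x else y with hp
      have hp0 : ∀ (m : ℕ) (hm : m < 2), m = 0 → p ⟨m, hm⟩ = x := by
        intro m hm h
        simp only [hp]
        split_ifs with hcnd <;> first | rfl | exact absurd h hcnd
      have hp1 : ∀ (m : ℕ) (hm : m < 2), m ≠ 0 → p ⟨m, hm⟩ = y := by
        intro m hm h
        simp only [hp]
        split_ifs with hcnd <;> first | rfl | exact absurd hcnd h
      refine ⟨p, ?_, ?_⟩
      · intro a b hab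
        have ha := a.isLt; have hb := b.isLt
        have hae : a = (⟨(a : ℕ), ha⟩ : Fin 2) := rfl
        have hbe : b = (⟨(b : ℕ), hb⟩ : Fin 2) := rfl
        rw [hae, hbe] at hab
        by_cases h1 : (a : ℕ) = 0 <;> by_cases h2 : (b : ℕ) = 0
        · exact Fin.ext (by omega)
        · rw [hp0 _ _ h1, hp1 _ _ h2] at hab; exact absurd hab hxy
        · rw [hp1 _ _ h1, hp0 _ _ h2] at hab; exact absurd hab.symm hxy
        · exact Fin.ext (by omega)
      · intro i
        have hi := i.isLt
        by_cases h0 : (i : ℕ) = 0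
        · have himg : (Finset.image (fun j : Fin 1 =>
              p ⟨(i : ℕ) + (j : ℕ), by have := j.isLt; omega⟩) Finset.univ) = {x} := by
            ext a
            simp only [Finset.mem_image, Finset.mem_univ, true_and, Finset.mem_singleton]
            constructor
            · rintro ⟨j, rfl⟩
              have hj := j.isLt
              exact hp0 _ _ (by omega)
            · rintro rfl
              exact ⟨⟨0, by omega⟩, hp0 _ _ (by omega)⟩
          rw [himg]; exact he
        · have himg : (Finset.image (fun j : Fin 1 =>
              p ⟨(i : ℕ) + (j : ℕ), by have := j.isLt; omega⟩) Finset.univ) = {y} := by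
            ext a
            simp only [Finset.mem_image, Finset.mem_univ, true_and, Finset.mem_singleton]
            constructor
            · rintro ⟨j, rfl⟩
              have hj := j.isLt
              exact hp1 _ _ (by omega)
            · rintro rfl
              exact ⟨⟨0, by omega⟩, hp1 _ _ (by omega)⟩
          rw [himg]; exact he'
    have h1 : (H.card : ℝ) ≤ 1 := by exact_mod_cast hcard
    have h2 : ((W.card).choose (1 - 1) : ℝ) = 1 := by norm_num
    rw [h2]
    norm_num
    linarith
  | succ s hs ih =>
    intro W H hHW hnp
    have hHcard : ∀ e ∈ H, e.card = s + 1 := fun e he => (hHW e he).2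
    -- per-vertex bound
    have hdeg : ∀ v ∈ W, ((H.filter (fun e => v ∈ e)).card : ℝ) ≤
        ((s : ℝ) + 1) ^ 2 / (2 * s) * ((W.card - 1).choose (s - 1)) +
        (((linkAt H v).filter (fun g => dset H g ≤ s + 1)).card : ℝ) := by
      intro v hv
      have hGP : ((linkAt H v).filter (fun g => dset H g ≤ s + 1)).card
          + ((linkAt H v).filter (fun g => ¬ dset H g ≤ s + 1)).card
          = (H.filter (fun e => v ∈ e)).card := by
        rw [Finset.card_filter_add_card_filter_not, card_linkAt]
      -- the heavy part of the link has no tight (s+1)-path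
      have hG : ¬ ∃ u : Fin ((s + 1) + s - 1) → α,
          IsTightPath s (s + 1) ((linkAt H v).filter (fun g => ¬ dset H g ≤ s + 1)) u := by
        rintro ⟨u, hu⟩
        have hu' : IsTightPath s (s + 1) (linkAt H v) u :=
          tightPath_mono (Finset.filter_subset _ _) hu
        obtain ⟨w, hw, htail⟩ := ins_path hs (by omega) (le_refl _) hHcard u hu'
        have hb := ext_bound hHcard w hw hnp
        have hFlast : (Finset.image (fun t : Fin s =>
              w ⟨(s + 1) + (t : ℕ), by have := t.isLt; omega⟩) Finset.univ)
            = Finset.image (fun a : Fin s =>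
              u ⟨s + (a : ℕ), by have := a.isLt; omega⟩) Finset.univ := by
          apply Finset.image_congr
          intro t _
          have htlt := t.isLt
          beta_reduce
          rw [htail ⟨(s + 1) + (t : ℕ), by omega⟩
            (by omega : s + 1 ≤ (s + 1) + (t : ℕ))
            (by omega : ((s + 1) + (t : ℕ)) - 1 < s + 1 + s - 1)]
          exact congrArg u (Fin.ext (by simp only []; omega))
        have hlw := hu.2 ⟨s, by omega⟩
        have hFG : (Finset.image (fun t : Fin s =>
              w ⟨(s + 1) + (t : ℕ), by have := t.isLt; omega⟩) Finset.univ)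
            ∈ ((linkAt H v).filter (fun g => ¬ dset H g ≤ s + 1)) := by
          rw [hFlast]; exact hlw
        have hFd : ¬ dset H (Finset.image (fun t : Fin s =>
              w ⟨(s + 1) + (t : ℕ), by have := t.isLt; omega⟩) Finset.univ) ≤ s + 1 :=
          (Finset.mem_filter.mp hFG).2
        exact hFd hb
      have hGW : ∀ g ∈ (linkAt H v).filter (fun g => ¬ dset H g ≤ s + 1),
          g ⊆ W.erase v ∧ g.card = s := by
        intro g hg
        have hg' := (Finset.mem_filter.mp hg).1
        obtain ⟨e, he, hve, rfl⟩ := mem_linkAt.mp hg'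
        refine ⟨Finset.erase_subset_erase v (hHW e he).1, ?_⟩
        rw [Finset.card_erase_of_mem hve, hHcard e he]
        omega
      have hGbound := ih (W.erase v) _ hGW hG
      rw [Finset.card_erase_of_mem hv] at hGbound
      have : ((H.filter (fun e => v ∈ e)).card : ℝ)
          = (((linkAt H v).filter (fun g => dset H g ≤ s + 1)).card : ℝ)
          + (((linkAt H v).filter (fun g => ¬ dset H g ≤ s + 1)).card : ℝ) := by
        rw [← Nat.cast_add, hGP]
      rw [this]
      linarith [hGbound]
    -- summation
    have hsum : ∑ v ∈ W, (H.filter (fun e => v ∈ e)).card = (s + 1) * H.card :=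
      sum_deg (fun e he => (hHW e he).1) hHcard
    have hlight := sum_light_le (D := s + 1) hHW
    have hx : (1 : ℝ) ≤ (s : ℝ) := by exact_mod_cast hs
    have hc0 : (0 : ℝ) ≤ ((W.card).choose s : ℝ) := by positivity
    have hid : ((W.card : ℝ)) * ((W.card - 1).choose (s - 1) : ℝ)
        = (s : ℝ) * ((W.card).choose s : ℝ) := by
      exact_mod_cast congrArg (fun t : ℕ => (t : ℝ)) (choose_id W.card s hs)
    have hkey : ((s : ℝ) + 1) * H.card ≤
        ((s : ℝ) + 1) ^ 2 / 2 * ((W.card).choose s : ℝ)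
        + ((s : ℝ) + 1) * ((W.card).choose s : ℝ) := by
      have h1 : ((s : ℝ) + 1) * H.card = ∑ v ∈ W, ((H.filter (fun e => v ∈ e)).card : ℝ) := by
        rw [← Nat.cast_sum, hsum]; push_cast; ring
      have h2 : ∑ v ∈ W, ((H.filter (fun e => v ∈ e)).card : ℝ) ≤
          (W.card : ℝ) * (((s : ℝ) + 1) ^ 2 / (2 * s) * ((W.card - 1).choose (s - 1)))
          + ∑ v ∈ W, (((linkAt H v).filter (fun g => dset H g ≤ s + 1)).card : ℝ) := by
        calc ∑ v ∈ W, ((H.filter (fun e => v ∈ e)).card : ℝ)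
            ≤ ∑ v ∈ W, ((((s : ℝ) + 1) ^ 2 / (2 * s) * ((W.card - 1).choose (s - 1)))
                + (((linkAt H v).filter (fun g => dset H g ≤ s + 1)).card : ℝ)) :=
              Finset.sum_le_sum hdeg
          _ = _ := by rw [Finset.sum_add_distrib, Finset.sum_const, nsmul_eq_mul]
      have h3 : ∑ v ∈ W, (((linkAt H v).filter (fun g => dset H g ≤ s + 1)).card : ℝ)
          ≤ ((s : ℝ) + 1) * ((W.card).choose s : ℝ) := by
        calc ∑ v ∈ W, (((linkAt H v).filter (fun g => dset H g ≤ s + 1)).card : ℝ)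
            = ((∑ v ∈ W, ((linkAt H v).filter (fun g => dset H g ≤ s + 1)).card : ℕ) : ℝ) := by
              rw [Nat.cast_sum]
          _ ≤ (((s + 1) * (W.card).choose s : ℕ) : ℝ) := by exact_mod_cast hlight
          _ = ((s : ℝ) + 1) * ((W.card).choose s : ℝ) := by push_cast; ring
      have h4 : (W.card : ℝ) * (((s : ℝ) + 1) ^ 2 / (2 * s) * ((W.card - 1).choose (s - 1)))
          = ((s : ℝ) + 1) ^ 2 / 2 * ((W.card).choose s : ℝ) := by
        have hs0 : (s : ℝ) ≠ 0 := by positivity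
        field_simp
        nlinarith [hid]
      linarith [h1, h2, h3, h4.le, h4.ge]
    -- conclude
    have hfinal : (H.card : ℝ) ≤ (((s : ℝ) + 1) + 1) ^ 2 / (2 * ((s : ℝ) + 1))
        * ((W.card).choose s : ℝ) := by
      rw [div_mul_eq_mul_div, le_div_iff₀ (by positivity)]
      nlinarith [hkey, hc0]
    have hchoose : (s + 1 - 1 : ℕ) = s := by omega
    rw [hchoose]
    push_cast
    linarith [hfinal]

end TightAux

open TightAux in
theorem short_tight_path_induction_step
    {α : Type*} [Fintype α] [DecidableEq α] (n r k : ℕ)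
    (hn : Fintype.card α = n) (hk : 2 ≤ k) (hrk : k - 1 ≤ r)
    -- the inductive hypothesis for (r-1)-uniform hypergraphs on at most n-1 vertices
    (hind : ∀ (W : Finset α) (H' : Finset (Finset α)), W.card ≤ n - 1 →
      (∀ e ∈ H', e ⊆ W ∧ e.card = r - 1) →
      (¬ ∃ v : Fin (k + (r - 1) - 1) → α, IsTightPath (r - 1) k H' v) →
      (H'.card : ℝ) ≤ (k : ℝ) ^ 2 / (2 * ((r : ℝ) - 1)) * ((n - 1).choose (r - 2)))
    (H : Finset (Finset α)) (hH : ∀ e ∈ H, e.card = r)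
    (hpath : ¬ ∃ v : Fin (k + r - 1) → α, IsTightPath r k H v) :
    (H.card : ℝ) ≤ (k : ℝ) ^ 2 / (2 * r) * (n.choose (r - 1)) := by
  rcases Nat.lt_or_ge r k with hlt | hge
  · -- diagonal case : r = k - 1
    have hk1 : k = r + 1 := by omega
    subst hk1
    have hr1 : 1 ≤ r := by omega
    have hbound := diag r hr1 Finset.univ H
      (fun e he => ⟨Finset.subset_univ e, hH e he⟩) hpath
    rw [Finset.card_univ, hn] at hbound
    push_cast at hbound ⊢
    exact hbound
  · -- case r ≥ k : link + averaging
    obtain ⟨s, rfl⟩ : ∃ s, r = s + 1 := ⟨r - 1, by omega⟩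
    have hs1 : 1 ≤ s := by omega
    have hks : k ≤ s + 1 := hge
    rcases Nat.eq_zero_or_pos n with hn0 | hnpos
    · have hHempty : H = ∅ := by
        rcases Finset.eq_empty_or_nonempty H with h | ⟨e, he⟩
        · exact h
        · exfalso
          have h1 : e.card = s + 1 := hH e he
          have h2 : e.card ≤ Finset.univ.card := Finset.card_le_card (Finset.subset_univ e)
          rw [Finset.card_univ, hn, hn0] at h2; omega
      subst hHempty
      simp only [Finset.card_empty, Nat.cast_zero]
      positivity
    · -- no link has a tight k-path
      have hnopath : ∀ v : α, ¬ ∃ u : Fin (k + s - 1) → α,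
          IsTightPath s k (linkAt H v) u := by
        rintro v ⟨u, hu⟩
        obtain ⟨w, hw, -⟩ := ins_path hs1 (by omega) hks hH u hu
        exact hpath ⟨w, hw⟩
      have hB : ∀ v : α, ((H.filter (fun e => v ∈ e)).card : ℝ) ≤
          (k : ℝ) ^ 2 / (2 * (((s + 1 : ℕ) : ℝ) - 1)) * (((n - 1).choose (s - 1) : ℕ) : ℝ) := by
        intro v
        have h1 := hind (Finset.univ.erase v) (linkAt H v) ?_ ?_ (hnopath v)
        · rwa [card_linkAt] at h1
        · rw [Finset.card_erase_of_mem (Finset.mem_univ v), Finset.card_univ, hn]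
        · intro g hg
          exact ⟨Finset.subset_erase.mpr ⟨Finset.subset_univ g, not_mem_of_linkAt hg⟩,
            card_of_mem_linkAt hH hg⟩
      have hdegsum : ∑ v ∈ Finset.univ, (H.filter (fun e => v ∈ e)).card = (s + 1) * H.card :=
        sum_deg (fun e _ => Finset.subset_univ e) hH
      have hid : ((n : ℝ)) * (((n - 1).choose (s - 1) : ℕ) : ℝ)
          = (s : ℝ) * ((n.choose s : ℕ) : ℝ) := by
        exact_mod_cast congrArg (fun t : ℕ => (t : ℝ)) (choose_id n s hs1)
      have hkey : ((s : ℝ) + 1) * H.card ≤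
          (k : ℝ) ^ 2 / 2 * ((n.choose s : ℕ) : ℝ) := by
        have h1 : ((s : ℝ) + 1) * H.card
            = ∑ v ∈ Finset.univ, ((H.filter (fun e => v ∈ e)).card : ℝ) := by
          rw [← Nat.cast_sum, hdegsum]; push_cast; ring
        have h2 : ∑ v ∈ Finset.univ, ((H.filter (fun e => v ∈ e)).card : ℝ) ≤
            (n : ℝ) * ((k : ℝ) ^ 2 / (2 * (s : ℝ)) * (((n - 1).choose (s - 1) : ℕ) : ℝ)) := by
          calc ∑ v ∈ Finset.univ, ((H.filter (fun e => v ∈ e)).card : ℝ)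
              ≤ ∑ _v ∈ (Finset.univ : Finset α),
                  ((k : ℝ) ^ 2 / (2 * (s : ℝ)) * (((n - 1).choose (s - 1) : ℕ) : ℝ)) := by
                apply Finset.sum_le_sum
                intro v _
                have := hB v
                have hcast : (((s + 1 : ℕ) : ℝ) - 1) = (s : ℝ) := by push_cast; ring
                rwa [hcast] at this
            _ = (n : ℝ) * ((k : ℝ) ^ 2 / (2 * (s : ℝ)) * (((n - 1).choose (s - 1) : ℕ) : ℝ)) := by
                rw [Finset.sum_const, Finset.card_univ, hn, nsmul_eq_mul]
        have hs0 : (s : ℝ) ≠ 0 := by positivity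
        have h3 : (n : ℝ) * ((k : ℝ) ^ 2 / (2 * (s : ℝ)) * (((n - 1).choose (s - 1) : ℕ) : ℝ))
            = (k : ℝ) ^ 2 / 2 * ((n.choose s : ℕ) : ℝ) := by
          field_simp
          nlinarith [hid]
        linarith [h1, h2, h3.le, h3.ge]
      -- conclude
      have hchoose : (s + 1 - 1 : ℕ) = s := by omega
      rw [hchoose]
      have hpos : (0 : ℝ) < ((s + 1 : ℕ) : ℝ) := by positivity
      rw [div_mul_eq_mul_div, le_div_iff₀ (by positivity)]
      have hc0 : (0 : ℝ) ≤ ((n.choose s : ℕ) : ℝ) := by positivity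
      push_cast
      nlinarith [hkey, hc0]
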